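/- Inversion of the basic inequality (Lemma 11 of the paper): suppose (i) D† + (A₂−B₁)·λ₂·‖b‖₁ ≤ [ (M₀₁·s_γ·λ₀²)^{1/2} + M₁₁^{1/2}·(s_γ·λ₀² + s_α·λ₁²)^{1/2} ]·Q^{1/2} + 2·A₂·λ₂·Σ_{j∈S}|b_j|; (ii) D† ≥ C·( (1 − exp(−c·‖b‖₁)) / (c·‖b‖₁) )·Q, with the ratio interpreted as 1 when b = 0; (iii) if Σ_{j∉S}|b_j| ≤ μ₂·Σ_{j∈S}|b_j| then ν₂₁²·(Σ_{j∈S}|b_j|)² ≤ s₁₁·Q; (iv) ϱ₅ := c·(A₂−B₁)^{−1}·μ₂₂²·ν₂₁^{−2}·C^{−1}·s₁₁·λ₂ < 1 and ϱ₆ := c·(A₂−B₁)^{−1}·μ₂₁^{−2}·C^{−1}·( 2·(M₀₁+M₁₁)·s_γ·λ₀² + 2·M₁₁·s_α·λ₁² )/λ₂ < 1. Then D† + (A₂−B₁)·λ₂·‖b‖₁ ≤ C^{−1}·[ 2·μ₂₁^{−2}·(M₀₁+M₁₁)·s_γ·λ₀² + 2·μ₂₁^{−2}·M₁₁·s_α·λ₁²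 + μ₂₂²·ν₂₁^{−2}·s₁₁·λ₂² ]. -/

import Mathlib

set_option maxHeartbeats 1000000

open Finset

/-- Quadratic upper bound on `exp (-y)` for `y ≥ 0`. -/
lemma aux_exp_neg_le (y : ℝ) (hy : 0 ≤ y) : Real.exp (-y) ≤ 1 - y + y ^ 2 / 2 := by
  have hP : 1 + y + y ^ 2 / 2 ≤ Real.exp y := Real.quadratic_le_exp_of_nonneg hy
  have hBpos : 0 < 1 - y + y ^ 2 / 2 := by linarith [sq_nonneg (y - 1)]
  have hkey : 1 ≤ (1 - y + y ^ 2 / 2) * Real.exp y := by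
    have h1 : (1 - y + y ^ 2 / 2) * (1 + y + y ^ 2 / 2) ≤ (1 - y + y ^ 2 / 2) * Real.exp y :=
      mul_le_mul_of_nonneg_left hP hBpos.le
    nlinarith [pow_nonneg hy 4, h1]
  rw [Real.exp_neg, ← one_div, div_le_iff₀ (Real.exp_pos y)]
  linarith

/-- Core inversion lemma. -/
lemma aux_core (C c θ a D T Q : ℝ) (hC : 0 < C) (hc : 0 < c) (hθ : 0 < θ)
    (ha : 0 ≤ a) (hT : 0 ≤ T) (hQ : 0 ≤ Q)
    (h1 : D + θ * T ≤ a * Real.sqrt Q)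
    (h2 : C * (if T = 0 then 1 else (1 - Real.exp (-(c * T))) / (c * T)) * Q ≤ D)
    (h3 : c * a ^ 2 ≤ 2 * C * θ) :
    D + θ * T ≤ a ^ 2 / C := by
  rcases eq_or_lt_of_le ha with ha0 | ha0
  · have h0 : D + θ * T ≤ 0 := by
      have := h1
      rw [← ha0] at this
      simpa using this
    have h0' : (0:ℝ) ≤ a ^ 2 / C := by positivity
    linarith
  · suffices hxa : Real.sqrt Q ≤ a / C by
      have h4 : a * Real.sqrt Q ≤ a * (a / C) := mul_le_mul_of_nonneg_left hxa ha
      calc D + θ * T ≤ a * Real.sqrt Q := h1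
        _ ≤ a * (a / C) := h4
        _ = a ^ 2 / C := by ring
    by_contra hx
    push_neg at hx
    set x := Real.sqrt Q with hxdef
    have hxnn : 0 ≤ x := Real.sqrt_nonneg Q
    have hxpos : 0 < x := lt_of_le_of_lt (by positivity) hx
    have hx' : a < C * x := by
      have := (div_lt_iff₀ hC).mp hx
      linarith
    have hQx : x ^ 2 = Q := Real.sq_sqrt hQ
    by_cases hT0 : T = 0
    · rw [if_pos hT0] at h2
      rw [hT0] at h1
      rw [← hQx] at h2
      have hax : a * x < (C * x) * x := mul_lt_mul_of_pos_right hx' hxpos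
      nlinarith [h2, h1, hax]
    · rw [if_neg hT0] at h2
      have hTpos : 0 < T := hT.lt_of_ne (Ne.symm hT0)
      have hy : 0 < c * T := mul_pos hc hTpos
      rw [← hQx] at h2
      have h2' : C * (1 - Real.exp (-(c * T))) * x ^ 2 ≤ D * (c * T) := by
        have e : C * ((1 - Real.exp (-(c * T))) / (c * T)) * x ^ 2
            = C * (1 - Real.exp (-(c * T))) * x ^ 2 / (c * T) := by ring
        rw [e] at h2
        exact (div_le_iff₀ hy).mp h2
      set y := c * T with hy'
      have hypos : 0 < y := hy
      have hDax : D ≤ a * x - θ * T := by linarith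
      have key : 2 * C ^ 2 * (1 - Real.exp (-y)) * x ^ 2 + a ^ 2 * y ^ 2 ≤ 2 * a * C * x * y := by
        have f1 : 2 * C * (C * (1 - Real.exp (-y)) * x ^ 2) ≤ 2 * C * (D * y) :=
          mul_le_mul_of_nonneg_left h2' (by linarith)
        have f2 : D * (2 * C * y) ≤ (a * x - θ * T) * (2 * C * y) :=
          mul_le_mul_of_nonneg_right hDax (by positivity)
        have f3 : c * a ^ 2 * (T * y) ≤ 2 * C * θ * (T * y) :=
          mul_le_mul_of_nonneg_right h3 (by positivity)
        have e2 : c * a ^ 2 * (T * y) = a ^ 2 * y ^ 2 := by rw [hy']; ring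
        nlinarith [f1, f2, f3, e2]
      rcases le_or_gt y 1 with hy1 | hy1
      · have hexp : Real.exp (-y) ≤ 1 - y + y ^ 2 / 2 := aux_exp_neg_le y hypos.le
        have hsq : 0 < (C * x - a) ^ 2 := pow_pos (by linarith) 2
        have h2nd : 0 ≤ y * (1 - y) * ((C * x) ^ 2 - a ^ 2) := by
          have hcxa : a ^ 2 ≤ (C * x) ^ 2 := by nlinarith [hx', ha0]
          have h0 : 0 ≤ y * (1 - y) := mul_nonneg hypos.le (by linarith)
          exact mul_nonneg h0 (by linarith)
        have hnn2 : (0:ℝ) ≤ 2 * C ^ 2 * x ^ 2 := by positivity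
        have hmul : 2 * C ^ 2 * x ^ 2 * (y - y ^ 2 / 2) ≤ 2 * C ^ 2 * x ^ 2 * (1 - Real.exp (-y)) :=
          mul_le_mul_of_nonneg_left (by linarith) hnn2
        linarith [key, hmul, h2nd, mul_pos hypos hsq]
      · have hE : Real.exp (-y) ≤ Real.exp (-1) := Real.exp_le_exp.mpr (by linarith)
        have h2e : (2:ℝ) < Real.exp 1 := by
          have := Real.exp_one_gt_d9
          norm_num at this ⊢
          linarith
        have hE2 : Real.exp (-1) < 1/2 := by
          rw [Real.exp_neg]
          have h9 : (Real.exp 1)⁻¹ < (2:ℝ)⁻¹ := inv_strictAnti₀ (by norm_num) h2e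
          norm_num at h9 ⊢
          linarith
        have h_half : Real.exp (-y) < 1/2 := lt_of_le_of_lt hE hE2
        have hxx : 0 < C ^ 2 * x ^ 2 := by positivity
        have hgt : C ^ 2 * x ^ 2 < 2 * C ^ 2 * (1 - Real.exp (-y)) * x ^ 2 := by
          nlinarith [hxx, h_half]
        linarith [key, hgt, sq_nonneg (C * x - a * y)]

/-- Inversion of the basic inequality (Lemma 11 of the paper). -/
theorem stmt_17 (q2 : ℕ) (hq2 : 1 ≤ q2)
    (b : Fin (q2 + 1) → ℝ)
    (S : Finset (Fin (q2 + 1))) (hcard : 1 ≤ S.card)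
    (s11 : ℝ) (hs11 : s11 = (S.card : ℝ))
    (Q Ddag : ℝ) (hQ : 0 ≤ Q) (hDdag : 0 ≤ Ddag)
    (lam0 lam1 lam2 sγ sα M01 M11 C c ν21 μ2 B1 A2 : ℝ)
    (hlam0 : 0 < lam0) (hlam1 : 0 < lam1) (hlam2 : 0 < lam2)
    (hsγ : 1 ≤ sγ) (hsα : 1 ≤ sα)
    (hM01 : 0 ≤ M01) (hM11 : 0 ≤ M11)
    (hC : 0 < C) (hc : 0 < c) (hν21 : 0 < ν21)
    (hμ2 : 1 < μ2) (hB1 : 0 ≤ B1)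
    (hA2 : B1 * (μ2 + 1) / (μ2 - 1) < A2)
    (μ21 μ22 : ℝ)
    (hμ21 : μ21 = 1 - 2 * A2 / ((μ2 + 1) * (A2 - B1)))
    (hμ22 : μ22 = (μ2 + 1) * (A2 - B1))
    -- (i) the basic inequality
    (hi : Ddag + (A2 - B1) * lam2 * (∑ j, |b j|) ≤
      (Real.sqrt (M01 * sγ * lam0 ^ 2)
          + Real.sqrt M11 * Real.sqrt (sγ * lam0 ^ 2 + sα * lam1 ^ 2)) * Real.sqrt Q
        + 2 * A2 * lam2 * ∑ j ∈ S, |b j|)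
    -- (ii) the local quadratic lower bound
    (hii : C * (if (∑ j, |b j|) = 0 then 1
        else (1 - Real.exp (-(c * ∑ j, |b j|))) / (c * ∑ j, |b j|)) * Q ≤ Ddag)
    -- (iii) the empirical compatibility condition
    (hiii : (∑ j ∈ Sᶜ, |b j|) ≤ μ2 * ∑ j ∈ S, |b j| →
      ν21 ^ 2 * (∑ j ∈ S, |b j|) ^ 2 ≤ s11 * Q)
    -- (iv) smallness conditions
    (hϱ5 : c * (A2 - B1)⁻¹ * μ22 ^ 2 * (ν21 ^ 2)⁻¹ * C⁻¹ * s11 * lam2 < 1)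
    (hϱ6 : c * (A2 - B1)⁻¹ * (μ21 ^ 2)⁻¹ * C⁻¹
        * (2 * (M01 + M11) * sγ * lam0 ^ 2 + 2 * M11 * sα * lam1 ^ 2) / lam2 < 1) :
    Ddag + (A2 - B1) * lam2 * (∑ j, |b j|) ≤
      C⁻¹ * (2 * (μ21 ^ 2)⁻¹ * (M01 + M11) * sγ * lam0 ^ 2
        + 2 * (μ21 ^ 2)⁻¹ * M11 * sα * lam1 ^ 2
        + μ22 ^ 2 * (ν21 ^ 2)⁻¹ * s11 * lam2 ^ 2) := by
  have hTnn : (0:ℝ) ≤ ∑ j, |b j| := Finset.sum_nonneg fun j _ => abs_nonneg _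
  have hTsnn : (0:ℝ) ≤ ∑ j ∈ S, |b j| := Finset.sum_nonneg fun j _ => abs_nonneg _
  set T := ∑ j, |b j| with hTdef
  set Ts := ∑ j ∈ S, |b j| with hTsdef
  clear_value T Ts
  have hμ2p : (0:ℝ) < μ2 - 1 := by linarith
  have hμ2p1 : (0:ℝ) < μ2 + 1 := by linarith
  have hBA : B1 * (μ2 + 1) < A2 * (μ2 - 1) := (div_lt_iff₀ hμ2p).mp hA2
  have hB1m : 0 ≤ B1 * (μ2 + 1) := mul_nonneg hB1 hμ2p1.le
  have hA2pos : 0 < A2 := by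
    by_contra hcon
    push_neg at hcon
    have : A2 * (μ2 - 1) ≤ 0 := mul_nonpos_of_nonpos_of_nonneg hcon hμ2p.le
    linarith
  have hK : 0 < A2 - B1 := by
    by_contra hcon
    push_neg at hcon
    have h1 : A2 * (μ2 - 1) ≤ B1 * (μ2 - 1) :=
      mul_le_mul_of_nonneg_right (by linarith) hμ2p.le
    have h2 : B1 * (μ2 - 1) ≤ B1 * (μ2 + 1) :=
      mul_le_mul_of_nonneg_left (by linarith) hB1
    linarith
  have hμ22pos : 0 < μ22 := by rw [hμ22]; exact mul_pos hμ2p1 hK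
  have hμ21pos : 0 < μ21 := by
    rw [hμ21, sub_pos, div_lt_one (mul_pos hμ2p1 hK)]
    linarith only [hBA]
  have hμ21le : μ21 ≤ 1 := by
    have h0 : 0 ≤ 2 * A2 / ((μ2 + 1) * (A2 - B1)) := by positivity
    rw [hμ21]; linarith
  have h2A2 : 2 * A2 = (1 - μ21) * μ22 := by
    rw [hμ21, hμ22]
    field_simp
    ring
  have hs11pos : 0 < s11 := by
    rw [hs11]
    have : 0 < S.card := hcard
    exact_mod_cast this
  set a := Real.sqrt (M01 * sγ * lam0 ^ 2)
      + Real.sqrt M11 * Real.sqrt (sγ * lam0 ^ 2 + sα * lam1 ^ 2) with hadef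
  clear_value a
  have hann : 0 ≤ a := by rw [hadef]; positivity
  set E' := 2 * (M01 + M11) * sγ * lam0 ^ 2 + 2 * M11 * sα * lam1 ^ 2 with hE'def
  clear_value E'
  have hsγ0 : (0:ℝ) ≤ sγ := by linarith
  have hsα0 : (0:ℝ) ≤ sα := by linarith
  have hE'nn : 0 ≤ E' := by
    have g1 : (0:ℝ) ≤ 2 * (M01 + M11) * sγ * lam0 ^ 2 :=
      mul_nonneg (mul_nonneg (by linarith) hsγ0) (sq_nonneg lam0)
    have g2 : (0:ℝ) ≤ 2 * M11 * sα * lam1 ^ 2 :=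
      mul_nonneg (mul_nonneg (by linarith) hsα0) (sq_nonneg lam1)
    rw [hE'def]
    linarith
  have haE : a ^ 2 ≤ E' := by
    have hn1 : (0:ℝ) ≤ M01 * sγ * lam0 ^ 2 :=
      mul_nonneg (mul_nonneg hM01 hsγ0) (sq_nonneg lam0)
    have hn3 : (0:ℝ) ≤ sγ * lam0 ^ 2 + sα * lam1 ^ 2 := by
      have := mul_nonneg hsγ0 (sq_nonneg lam0)
      have := mul_nonneg hsα0 (sq_nonneg lam1)
      linarith
    have h1 : Real.sqrt (M01 * sγ * lam0 ^ 2) ^ 2 = M01 * sγ * lam0 ^ 2 := Real.sq_sqrt hn1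
    have h23 : (Real.sqrt M11 * Real.sqrt (sγ * lam0 ^ 2 + sα * lam1 ^ 2)) ^ 2
        = M11 * (sγ * lam0 ^ 2 + sα * lam1 ^ 2) := by
      rw [mul_pow, Real.sq_sqrt hM11, Real.sq_sqrt hn3]
    have hsq := sq_nonneg (Real.sqrt (M01 * sγ * lam0 ^ 2)
      - Real.sqrt M11 * Real.sqrt (sγ * lam0 ^ 2 + sα * lam1 ^ 2))
    rw [hadef, hE'def]
    linarith only [h1, h23, hsq]
  set F := μ22 ^ 2 * (ν21 ^ 2)⁻¹ * s11 * lam2 ^ 2 with hFdef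
  clear_value F
  have hFnn : 0 ≤ F := by
    rw [hFdef]
    exact mul_nonneg (mul_nonneg (mul_nonneg (sq_nonneg μ22) (inv_nonneg.mpr (sq_nonneg ν21)))
      hs11pos.le) (sq_nonneg lam2)
  -- translated smallness conditions
  have hρ6 : c * E' < C * (A2 - B1) * μ21 ^ 2 * lam2 := by
    have h := hϱ6
    rw [div_lt_one hlam2] at h
    have hpos : (0:ℝ) < (A2 - B1) * μ21 ^ 2 * C := by positivity
    have h' := mul_lt_mul_of_pos_right h hpos
    have e1 : c * (A2 - B1)⁻¹ * (μ21 ^ 2)⁻¹ * C⁻¹ * E' * ((A2 - B1) * μ21 ^ 2 * C) = c * E' := by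
      field_simp
    rw [e1] at h'
    linarith only [h']
  have hρ5 : c * F < C * (A2 - B1) * lam2 := by
    have hpos : (0:ℝ) < (A2 - B1) * C * lam2 := by positivity
    have h' := mul_lt_mul_of_pos_right hϱ5 hpos
    have e1 : c * (A2 - B1)⁻¹ * μ22 ^ 2 * (ν21 ^ 2)⁻¹ * C⁻¹ * s11 * lam2 * ((A2 - B1) * C * lam2)
        = c * F := by
      rw [hFdef]; field_simp
    rw [e1] at h'
    linarith only [h']
  -- the common final bound
  have hfinal : ∀ L : ℝ, L ≤ ((μ21 ^ 2)⁻¹ * E' + F) / C →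
      L ≤ C⁻¹ * (2 * (μ21 ^ 2)⁻¹ * (M01 + M11) * sγ * lam0 ^ 2
        + 2 * (μ21 ^ 2)⁻¹ * M11 * sα * lam1 ^ 2 + F) := by
    intro L hL
    have e : C⁻¹ * (2 * (μ21 ^ 2)⁻¹ * (M01 + M11) * sγ * lam0 ^ 2
        + 2 * (μ21 ^ 2)⁻¹ * M11 * sα * lam1 ^ 2 + F) = ((μ21 ^ 2)⁻¹ * E' + F) / C := by
      rw [hE'def, div_eq_inv_mul]
      ring
    rw [e]
    exact hL
  by_cases hcone : (∑ j ∈ Sᶜ, |b j|) ≤ μ2 * Ts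
  · -- cone case
    have hcomp := hiii hcone
    have hTsx : ν21 * Ts ≤ Real.sqrt s11 * Real.sqrt Q := by
      rw [← Real.sqrt_mul hs11pos.le]
      rw [show ν21 * Ts = Real.sqrt ((ν21 * Ts) ^ 2) from
        (Real.sqrt_sq (by positivity)).symm]
      apply Real.sqrt_le_sqrt
      calc (ν21 * Ts) ^ 2 = ν21 ^ 2 * Ts ^ 2 := by ring
        _ ≤ s11 * Q := hcomp
    set m5 := μ22 * lam2 * Real.sqrt s11 / ν21 with hm5def
    clear_value m5
    have hm5nn : 0 ≤ m5 := by
      rw [hm5def]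
      apply div_nonneg _ hν21.le
      exact mul_nonneg (mul_nonneg hμ22pos.le hlam2.le) (Real.sqrt_nonneg _)
    have hm5sq : m5 ^ 2 = F := by
      rw [hm5def, hFdef, div_pow, mul_pow, mul_pow, Real.sq_sqrt hs11pos.le]
      field_simp
    have hTs2 : 2 * A2 * lam2 * Ts ≤ (1 - μ21) * m5 * Real.sqrt Q := by
      have hTs' : Ts ≤ Real.sqrt s11 * Real.sqrt Q / ν21 := by
        rw [le_div_iff₀ hν21]
        linarith only [hTsx]
      have hcoef : (0:ℝ) ≤ (1 - μ21) * μ22 * lam2 :=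
        mul_nonneg (mul_nonneg (by linarith) hμ22pos.le) hlam2.le
      have key := mul_le_mul_of_nonneg_left hTs' hcoef
      have e1 : (1 - μ21) * μ22 * lam2 * (Real.sqrt s11 * Real.sqrt Q / ν21)
          = (1 - μ21) * m5 * Real.sqrt Q := by
        rw [hm5def]; ring
      have e2 : 2 * A2 * lam2 * Ts = (1 - μ21) * μ22 * lam2 * Ts := by
        rw [h2A2]
      rw [e1] at key
      linarith only [key, e2]
    set M := a + (1 - μ21) * m5 with hMdef
    clear_value M
    have hMnn : 0 ≤ M := by
      rw [hMdef]
      have : (0:ℝ) ≤ (1 - μ21) * m5 := mul_nonneg (by linarith) hm5nn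
      linarith
    have h1 : Ddag + (A2 - B1) * lam2 * T ≤ M * Real.sqrt Q := by
      have e : M * Real.sqrt Q = a * Real.sqrt Q + (1 - μ21) * m5 * Real.sqrt Q := by
        rw [hMdef]; ring
      rw [e]
      linarith only [hi, hTs2]
    have hMsq : μ21 ^ 2 * M ^ 2 ≤ E' + μ21 ^ 2 * F := by
      have hid : μ21 ^ 2 * M ^ 2 ≤ μ21 * a ^ 2 + μ21 ^ 2 * (1 - μ21) * m5 ^ 2 := by
        have hint : 0 ≤ μ21 * (1 - μ21) * (a - μ21 * m5) ^ 2 :=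
          mul_nonneg (mul_nonneg hμ21pos.le (by linarith)) (sq_nonneg _)
        rw [hMdef]
        linarith only [hint]
      have e1 : μ21 * a ^ 2 ≤ E' := by
        have hint : 0 ≤ (1 - μ21) * a ^ 2 := mul_nonneg (by linarith) (sq_nonneg a)
        linarith only [haE, hint]
      have e2 : μ21 ^ 2 * (1 - μ21) * m5 ^ 2 ≤ μ21 ^ 2 * m5 ^ 2 := by
        have hint : 0 ≤ μ21 ^ 3 * m5 ^ 2 := mul_nonneg (pow_nonneg hμ21pos.le 3) (sq_nonneg m5)
        linarith only [hint]
      rw [← hm5sq]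
      linarith only [hid, e1, e2]
    have h3 : c * M ^ 2 ≤ 2 * C * ((A2 - B1) * lam2) := by
      have t1 : c * (μ21 ^ 2 * M ^ 2) ≤ c * (E' + μ21 ^ 2 * F) :=
        mul_le_mul_of_nonneg_left hMsq hc.le
      have t2 : μ21 ^ 2 * (c * F) ≤ μ21 ^ 2 * (C * (A2 - B1) * lam2) :=
        mul_le_mul_of_nonneg_left hρ5.le (sq_nonneg μ21)
      have hcc : μ21 ^ 2 * (c * M ^ 2) ≤ μ21 ^ 2 * (2 * C * ((A2 - B1) * lam2)) := by
        linarith only [t1, t2, hρ6]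
      exact le_of_mul_le_mul_left hcc (by positivity : (0:ℝ) < μ21 ^ 2)
    have hcore := aux_core C c ((A2 - B1) * lam2) M Ddag T Q hC hc
      (mul_pos hK hlam2) hMnn hTnn hQ (by linarith [h1]) hii h3
    apply hfinal
    have hM2 : M ^ 2 ≤ (μ21 ^ 2)⁻¹ * E' + F := by
      have h7 : (μ21 ^ 2)⁻¹ * E' + F = (E' + μ21 ^ 2 * F) / μ21 ^ 2 := by
        field_simp
      rw [h7, le_div_iff₀ (by positivity : (0:ℝ) < μ21 ^ 2)]
      linarith only [hMsq]
    calc Ddag + (A2 - B1) * lam2 * T ≤ M ^ 2 / C := hcore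
      _ ≤ ((μ21 ^ 2)⁻¹ * E' + F) / C := (div_le_div_iff_of_pos_right hC).mpr hM2
  · -- non-cone case
    push_neg at hcone
    have hsum : Ts + (∑ j ∈ Sᶜ, |b j|) = T := by
      rw [hTdef, hTsdef]
      exact Finset.sum_add_sum_compl S _
    have hconeT : (μ2 + 1) * Ts ≤ T := by linarith only [hcone, hsum]
    have hTs2 : 2 * A2 * lam2 * Ts ≤ 2 * A2 * lam2 / (μ2 + 1) * T := by
      rw [div_mul_eq_mul_div, le_div_iff₀ hμ2p1]
      have h0 : (0:ℝ) ≤ 2 * A2 * lam2 := by positivity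
      have hint := mul_le_mul_of_nonneg_left hconeT h0
      linarith only [hint]
    have hθpos : 0 < μ21 * ((A2 - B1) * lam2) := mul_pos hμ21pos (mul_pos hK hlam2)
    have hθeq : μ21 * ((A2 - B1) * lam2) = (A2 - B1) * lam2 - 2 * A2 * lam2 / (μ2 + 1) := by
      rw [hμ21]
      field_simp
    have h1 : Ddag + μ21 * ((A2 - B1) * lam2) * T ≤ a * Real.sqrt Q := by
      have e : μ21 * ((A2 - B1) * lam2) * T
          = (A2 - B1) * lam2 * T - 2 * A2 * lam2 / (μ2 + 1) * T := by
        rw [hθeq]; ring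
      rw [e]
      linarith only [hi, hTs2]
    have h3 : c * a ^ 2 ≤ 2 * C * (μ21 * ((A2 - B1) * lam2)) := by
      have t1 : c * a ^ 2 ≤ c * E' := mul_le_mul_of_nonneg_left haE hc.le
      have hint : 0 ≤ (2 - μ21) * (C * (A2 - B1) * lam2 * μ21) :=
        mul_nonneg (by linarith) (by positivity)
      linarith only [t1, hρ6, hint]
    have hcore := aux_core C c (μ21 * ((A2 - B1) * lam2)) a Ddag T Q hC hc hθpos hann hTnn hQ
      h1 hii h3
    apply hfinal
    have hL : μ21 * (Ddag + (A2 - B1) * lam2 * T) ≤ Ddag + μ21 * ((A2 - B1) * lam2) * T := by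
      have hint : 0 ≤ (1 - μ21) * Ddag := mul_nonneg (by linarith) hDdag
      linarith only [hint]
    have hL2 : μ21 * (Ddag + (A2 - B1) * lam2 * T) ≤ a ^ 2 / C := le_trans hL hcore
    rw [le_div_iff₀ hC]
    have h4 : μ21 * ((Ddag + (A2 - B1) * lam2 * T) * C) ≤ a ^ 2 := by
      have h4' := mul_le_mul_of_nonneg_right hL2 hC.le
      rw [div_mul_cancel₀ _ (ne_of_gt hC)] at h4'
      linarith only [h4']
    have h5 : a ^ 2 * μ21 ≤ E' := by
      have hint : 0 ≤ (1 - μ21) * a ^ 2 := mul_nonneg (by linarith) (sq_nonneg a)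
      linarith only [haE, hint]
    have h6 : (Ddag + (A2 - B1) * lam2 * T) * C * μ21 ^ 2 ≤ E' := by
      have hint := mul_le_mul_of_nonneg_left h4 hμ21pos.le
      linarith only [hint, h5]
    have h7 : (μ21 ^ 2)⁻¹ * E' = E' / μ21 ^ 2 := by rw [div_eq_inv_mul]
    rw [h7]
    have h8 : (Ddag + (A2 - B1) * lam2 * T) * C ≤ E' / μ21 ^ 2 := by
      rw [le_div_iff₀ (by positivity : (0:ℝ) < μ21 ^ 2)]
      exact h6
    linarith only [h8, hFnn]
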